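/- If two coefficient families A and B both belong to the class 𝒪^{ℏ,ℏ⁻¹}(ρ), then so does their Cauchy product (A·B)(m,n) = Σ_{m₁+m₂=m} Σ_{n₁+n₂=n} A(m₁,n₁)·B(m₂,n₂); consequently 𝒪^{ℏ,ℏ⁻¹}(ρ) is closed under addition and multiplication, i.e. it is a subring of the ring of formal series Σ A(m,n) x^m ℏ^{−n}. -/

import Mathlib

open scoped BigOperators Classical

/-- The pairing `⟨ρ, m⟩ = ∑_{a=1}^r ξ_a m_a` of the nef class `ρ` with a multi-index
`m ∈ ℕ^s` (only the first `r` components of `m` enter). -/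
def nefPairing (s r : ℕ) (hrs : r ≤ s) (ξ : Fin r → ℝ) (m : Fin s → ℕ) : ℝ :=
  ∑ a : Fin r, ξ a * (m (Fin.castLE hrs a) : ℝ)

/-- Membership in the class `𝒪^{ℏ,ℏ⁻¹}(ρ)` of coefficient families `A : ℕ^s × ℤ → ℂ`:
(0) for each `m` only finitely many `n` have `A(m,n) ≠ 0`;
(i) `A(m,n) = 0` whenever `-n > ⟨ρ,m⟩`;
(ii) there are `B, C > 0` with `|A(m,n)| ≤ B C^{|m|+|n|}/n!` for `n ≥ 0` and
`|A(m,n)| ≤ B C^{|m|+|n|} (-n)!` for `n ≤ 0`. -/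
def MemOhh (s r : ℕ) (hrs : r ≤ s) (ξ : Fin r → ℝ) (A : (Fin s → ℕ) → ℤ → ℂ) : Prop :=
  (∀ m : Fin s → ℕ, {n : ℤ | A m n ≠ 0}.Finite) ∧
  (∀ (m : Fin s → ℕ) (n : ℤ), nefPairing s r hrs ξ m < -(n : ℝ) → A m n = 0) ∧
  (∃ B C : ℝ, 0 < B ∧ 0 < C ∧ ∀ (m : Fin s → ℕ) (n : ℤ),
    ‖A m n‖ ≤ B * C ^ ((∑ j, m j) + n.natAbs) *
      (if 0 ≤ n then 1 / (Nat.factorial n.toNat : ℝ) else (Nat.factorial n.natAbs : ℝ)))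

/-- The Cauchy product `(A·B)(m,n) = ∑_{m₁+m₂=m} ∑_{n₁+n₂=n} A(m₁,n₁) B(m₂,n₂)` of two
doubly-indexed coefficient families; the (a priori infinite) sum over `n₁ + n₂ = n` is taken
as a `tsum`, which is a genuine finite sum for families with finite `ℤ`-support. -/
noncomputable def cauchyProdZ (s : ℕ) (A B : (Fin s → ℕ) → ℤ → ℂ) :
    (Fin s → ℕ) → ℤ → ℂ :=
  fun m n => ∑' p : (Fin s → ℕ) × ℤ,
    if p.1 ≤ m then A p.1 p.2 * B (fun j => m j - p.1 j) (n - p.2) else 0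


section Helpers
open scoped Pointwise

noncomputable def fW (n : ℤ) : ℝ :=
  if 0 ≤ n then 1 / (Nat.factorial n.toNat : ℝ) else (Nat.factorial n.natAbs : ℝ)

lemma fW_pos (n : ℤ) : 0 < fW n := by
  unfold fW; split <;> positivity

lemma one_le_pow_aux {a : ℝ} (h : 1 ≤ a) (n : ℕ) : 1 ≤ a ^ n := by
  calc (1:ℝ) = 1 ^ n := (one_pow n).symm
  _ ≤ a ^ n := pow_le_pow_left₀ zero_le_one h n

lemma choose_le_two_pow (n k : ℕ) : n.choose k ≤ 2 ^ n := by
  rcases le_or_gt k n with h | h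
  · calc n.choose k ≤ ∑ i ∈ Finset.range (n+1), n.choose i :=
        Finset.single_le_sum (fun i _ => Nat.zero_le _)
          (Finset.mem_range.2 (Nat.lt_succ_of_le h))
    _ = 2 ^ n := Nat.sum_range_choose n
  · simp [Nat.choose_eq_zero_of_lt h]

lemma fact_add_le (a b : ℕ) :
    Nat.factorial (a + b) ≤ 2 ^ (a + b) * (Nat.factorial a * Nat.factorial b) := by
  calc Nat.factorial (a + b)
      = (a + b).choose b * Nat.factorial a * Nat.factorial b :=
        (Nat.add_choose_mul_factorial_mul_factorial a b).symm
  _ ≤ 2 ^ (a + b) * Nat.factorial a * Nat.factorial b := by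
      gcongr; exact choose_le_two_pow _ _
  _ = 2 ^ (a + b) * (Nat.factorial a * Nat.factorial b) := by ring

lemma fact_split_le {a k : ℕ} (h : a ≤ k) :
    Nat.factorial k ≤ 2 ^ k * (Nat.factorial a * Nat.factorial (k - a)) := by
  have h' : a + (k - a) = k := Nat.add_sub_cancel' h
  calc Nat.factorial k = Nat.factorial (a + (k - a)) := by rw [h']
  _ ≤ 2 ^ (a + (k - a)) * (Nat.factorial a * Nat.factorial (k - a)) := fact_add_le _ _
  _ = 2 ^ k * (Nat.factorial a * Nat.factorial (k - a)) := by rw [h']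

lemma fact_mul_fact_le {a k : ℕ} (h : k ≤ a) :
    Nat.factorial k * Nat.factorial (a - k) ≤ Nat.factorial a := by
  have h' : k + (a - k) = a := Nat.add_sub_cancel' h
  have := Nat.factorial_mul_factorial_dvd_factorial_add k (a - k)
  rw [h'] at this
  exact Nat.le_of_dvd (Nat.factorial_pos a) this

lemma fW_mixed (n₁ n₂ : ℤ) (N : ℕ) (h₁ : 0 ≤ n₁) (h₂' : n₂ < 0) (h₂ : -(N:ℤ) ≤ n₂) :
    fW n₁ * fW n₂ ≤ 2 ^ (n₁ + n₂).natAbs * 2 ^ N * fW (n₁ + n₂) := by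
  set a := n₁.toNat with ha
  set k := n₂.natAbs with hk
  have hkN : k ≤ N := by omega
  have e₁ : fW n₁ = 1 / (Nat.factorial a : ℝ) := by rw [fW, if_pos h₁]
  have e₂ : fW n₂ = (Nat.factorial k : ℝ) := by rw [fW, if_neg (not_le.2 h₂')]
  rcases le_or_gt 0 (n₁ + n₂) with hn | hn
  · have hka : k ≤ a := by omega
    have h1 : (n₁ + n₂).toNat = a - k := by omega
    have h2 : (n₁ + n₂).natAbs = a - k := by omega
    have e₃ : fW (n₁ + n₂) = 1 / (Nat.factorial (a - k) : ℝ) := by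
      rw [fW, if_pos hn, h1]
    rw [e₁, e₂, e₃, h2]
    rw [div_mul_eq_mul_div, one_mul, mul_one_div, div_le_div_iff₀ (by positivity) (by positivity)]
    have key : (Nat.factorial k : ℝ) * Nat.factorial (a - k) ≤ Nat.factorial a := by
      exact_mod_cast fact_mul_fact_le hka
    calc (Nat.factorial k : ℝ) * Nat.factorial (a - k) ≤ Nat.factorial a := key
    _ ≤ (2 ^ (a - k) * 2 ^ N) * Nat.factorial a := by
        refine le_mul_of_one_le_left (by positivity) ?_
        calc (1:ℝ) = 1 * 1 := (one_mul 1).symm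
        _ ≤ 2 ^ (a - k) * 2 ^ N := by gcongr <;> exact one_le_pow_aux (by norm_num) _
    _ = 2 ^ (a - k) * 2 ^ N * Nat.factorial a := by ring
  · have hak : a ≤ k := by omega
    have h2 : (n₁ + n₂).natAbs = k - a := by omega
    have e₃ : fW (n₁ + n₂) = (Nat.factorial (k - a) : ℝ) := by
      rw [fW, if_neg (not_le.2 hn), h2]
    rw [e₁, e₂, e₃, h2]
    have key : (Nat.factorial k : ℝ) ≤ 2 ^ N * (Nat.factorial a * Nat.factorial (k - a)) := by
      calc (Nat.factorial k : ℝ) ≤ 2 ^ k * (Nat.factorial a * Nat.factorial (k - a)) := by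
            exact_mod_cast fact_split_le hak
      _ ≤ 2 ^ N * (Nat.factorial a * Nat.factorial (k - a)) := by
          gcongr
          norm_num
    rw [div_mul_eq_mul_div, one_mul, div_le_iff₀ (by positivity)]
    calc (Nat.factorial k : ℝ) ≤ 2 ^ N * (Nat.factorial a * Nat.factorial (k - a)) := key
    _ = 2 ^ N * Nat.factorial (k - a) * Nat.factorial a := by ring
    _ ≤ 2 ^ (k - a) * (2 ^ N * Nat.factorial (k - a) * Nat.factorial a) :=
        le_mul_of_one_le_left (by positivity) (one_le_pow_aux (by norm_num) (k - a))
    _ = 2 ^ (k - a) * 2 ^ N * Nat.factorial (k - a) * Nat.factorial a := by ring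

lemma fW_mul_le (n₁ n₂ : ℤ) (N : ℕ) (h₁ : -(N:ℤ) ≤ n₁) (h₂ : -(N:ℤ) ≤ n₂) :
    fW n₁ * fW n₂ ≤ 2 ^ (n₁ + n₂).natAbs * 2 ^ N * fW (n₁ + n₂) := by
  rcases le_or_gt 0 n₁ with hp₁ | hp₁ <;> rcases le_or_gt 0 n₂ with hp₂ | hp₂
  · -- both nonneg
    set a := n₁.toNat with ha
    set b := n₂.toNat with hb
    have hn : 0 ≤ n₁ + n₂ := by omega
    have h1 : (n₁ + n₂).toNat = a + b := by omega
    have h2 : (n₁ + n₂).natAbs = a + b := by omega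
    rw [fW, fW, fW, if_pos hp₁, if_pos hp₂, if_pos hn, h1, h2]
    rw [div_mul_div_comm, one_mul, mul_one_div, div_le_div_iff₀ (by positivity) (by positivity)]
    calc (1:ℝ) * Nat.factorial (a + b) = Nat.factorial (a + b) := one_mul _
    _ ≤ 2 ^ (a + b) * (Nat.factorial a * Nat.factorial b) := by exact_mod_cast fact_add_le a b
    _ ≤ 2 ^ N * (2 ^ (a + b) * (Nat.factorial a * Nat.factorial b)) :=
        le_mul_of_one_le_left (by positivity) (one_le_pow_aux (by norm_num) N)
    _ = 2 ^ (a + b) * 2 ^ N * (Nat.factorial a * Nat.factorial b) := by ring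
  · exact fW_mixed n₁ n₂ N hp₁ hp₂ h₂
  · rw [mul_comm (fW n₁), add_comm n₁]
    exact fW_mixed n₂ n₁ N hp₂ hp₁ h₁
  · set k₁ := n₁.natAbs
    set k₂ := n₂.natAbs
    have hn : n₁ + n₂ < 0 := by omega
    have h2 : (n₁ + n₂).natAbs = k₁ + k₂ := by omega
    rw [fW, fW, fW, if_neg (not_le.2 hp₁), if_neg (not_le.2 hp₂), if_neg (not_le.2 hn), h2]
    have key : (Nat.factorial k₁ : ℝ) * Nat.factorial k₂ ≤ Nat.factorial (k₁ + k₂) := by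
      exact_mod_cast Nat.le_of_dvd (Nat.factorial_pos _)
        (Nat.factorial_mul_factorial_dvd_factorial_add k₁ k₂)
    calc (Nat.factorial k₁ : ℝ) * Nat.factorial k₂ ≤ Nat.factorial (k₁ + k₂) := key
    _ ≤ (2 ^ (k₁ + k₂) * 2 ^ N) * Nat.factorial (k₁ + k₂) := by
        refine le_mul_of_one_le_left (by positivity) ?_
        calc (1:ℝ) = 1 * 1 := (one_mul 1).symm
        _ ≤ 2 ^ (k₁ + k₂) * 2 ^ N := by
            gcongr <;> exact one_le_pow_aux (by norm_num) _
    _ = 2 ^ (k₁ + k₂) * 2 ^ N * Nat.factorial (k₁ + k₂) := by ring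

variable {s r : ℕ} {hrs : r ≤ s} {ξ : Fin r → ℝ}

lemma nefPairing_nonneg (hξ : ∀ a, 0 ≤ ξ a) (m : Fin s → ℕ) :
    0 ≤ nefPairing s r hrs ξ m :=
  Finset.sum_nonneg fun a _ => mul_nonneg (hξ a) (Nat.cast_nonneg _)

lemma nefPairing_mono (hξ : ∀ a, 0 ≤ ξ a) {m₁ m : Fin s → ℕ} (h : m₁ ≤ m) :
    nefPairing s r hrs ξ m₁ ≤ nefPairing s r hrs ξ m :=
  Finset.sum_le_sum fun a _ =>
    mul_le_mul_of_nonneg_left (Nat.cast_le.2 (h _)) (hξ a)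

lemma nefPairing_add {m₁ m : Fin s → ℕ} (h : m₁ ≤ m) :
    nefPairing s r hrs ξ m₁ + nefPairing s r hrs ξ (fun j => m j - m₁ j)
      = nefPairing s r hrs ξ m := by
  unfold nefPairing
  rw [← Finset.sum_add_distrib]
  refine Finset.sum_congr rfl fun a _ => ?_
  rw [Nat.cast_sub (h _)]
  ring

lemma nefPairing_le (hξ : ∀ a, 0 ≤ ξ a) (m : Fin s → ℕ) :
    nefPairing s r hrs ξ m ≤ (⌈∑ a : Fin r, ξ a⌉₊ * ∑ j, m j : ℕ) := by
  have h1 : nefPairing s r hrs ξ m ≤ (∑ a : Fin r, ξ a) * (∑ j, m j : ℕ) := by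
    rw [Finset.sum_mul]
    refine Finset.sum_le_sum fun a _ => mul_le_mul_of_nonneg_left ?_ (hξ a)
    exact_mod_cast Nat.cast_le.2 (Finset.single_le_sum (f := m)
      (fun i _ => Nat.zero_le _) (Finset.mem_univ _))
  refine h1.trans ?_
  push_cast
  exact mul_le_mul_of_nonneg_right (Nat.le_ceil _) (by positivity)

set_option maxHeartbeats 1000000 in
lemma memOhh_mul (s r : ℕ) (hrs : r ≤ s) (ξ : Fin r → ℝ) (hξ : ∀ a, 0 ≤ ξ a)
    (A B : (Fin s → ℕ) → ℤ → ℂ)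
    (hA : MemOhh s r hrs ξ A) (hB : MemOhh s r hrs ξ B) :
    MemOhh s r hrs ξ (cauchyProdZ s A B) := by
  obtain ⟨hA0, hA1, BA, CA, hBA, hCA, hA2⟩ := hA
  obtain ⟨hB0, hB1, BB, CB, hBB, hCB, hB2⟩ := hB
  set C : ℝ := max 1 (max CA CB) with hCdef
  have hC1 : (1:ℝ) ≤ C := le_max_left _ _
  have hC0 : (0:ℝ) < C := lt_of_lt_of_le one_pos hC1
  have hA2' : ∀ m n, ‖A m n‖ ≤ BA * C ^ ((∑ j, m j) + n.natAbs) * fW n := by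
    intro m n
    refine (hA2 m n).trans ?_
    show BA * CA ^ _ * fW n ≤ _
    gcongr
    · exact (fW_pos n).le
    · exact le_trans (le_max_left CA CB) (le_max_right 1 (max CA CB))
  have hB2' : ∀ m n, ‖B m n‖ ≤ BB * C ^ ((∑ j, m j) + n.natAbs) * fW n := by
    intro m n
    refine (hB2 m n).trans ?_
    show BB * CB ^ _ * fW n ≤ _
    gcongr
    · exact (fW_pos n).le
    · exact le_trans (le_max_right CA CB) (le_max_right 1 (max CA CB))
  set K : ℝ := ∑ a : Fin r, ξ a with hK
  set Kn : ℕ := ⌈K⌉₊ with hKn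
  set Am : ℝ := 2 * (2 * Kn + 1) * C ^ (2 * Kn + 1) * 2 ^ Kn with hAm
  set An : ℝ := 2 ^ 2 * C ^ 2 with hAn
  have hAm1 : (1:ℝ) ≤ Am := by
    rw [hAm]
    calc (1:ℝ) = 1 * 1 * 1 := by ring
    _ ≤ 2 * (2 * Kn + 1) * C ^ (2 * Kn + 1) * 2 ^ Kn := by
        have h1 : (1:ℝ) ≤ C ^ (2 * Kn + 1) := one_le_pow_aux hC1 _
        have h2 : (1:ℝ) ≤ (2:ℝ) ^ Kn := one_le_pow_aux (by norm_num) _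
        have h3 : (1:ℝ) ≤ 2 * (2 * (Kn:ℝ) + 1) := by
          have := Nat.cast_nonneg (α := ℝ) Kn
          nlinarith
        exact mul_le_mul (mul_le_mul h3 h1 zero_le_one (by linarith)) h2 zero_le_one
          (by nlinarith)
  have hAn1 : (1:ℝ) ≤ An := by
    rw [hAn]
    have h1 : (1:ℝ) ≤ C ^ 2 := one_le_pow_aux hC1 _
    nlinarith
  have hAmAn1 : (1:ℝ) ≤ Am * An := by nlinarith
  refine ⟨?_, ?_, BA * BB, Am * An, mul_pos hBA hBB, one_pos.trans_le hAmAn1, ?_⟩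
  · -- finiteness of ℤ-support
    intro m
    have hfin : (((⋃ m₁ ∈ Set.Icc (0:Fin s → ℕ) m, {k : ℤ | A m₁ k ≠ 0}) +
        (⋃ m₁ ∈ Set.Icc (0:Fin s → ℕ) m, {k : ℤ | B m₁ k ≠ 0})) : Set ℤ).Finite :=
      Set.Finite.add
        ((Set.finite_Icc _ _).biUnion fun m₁ _ => hA0 m₁)
        ((Set.finite_Icc _ _).biUnion fun m₁ _ => hB0 m₁)
    refine hfin.subset ?_
    intro n hn
    simp only [Set.mem_setOf_eq] at hn
    have hex : ∃ p : (Fin s → ℕ) × ℤ,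
        (if p.1 ≤ m then A p.1 p.2 * B (fun j => m j - p.1 j) (n - p.2) else 0) ≠ 0 := by
      by_contra h
      push_neg at h
      apply hn
      calc cauchyProdZ s A B m n
          = ∑' _p : (Fin s → ℕ) × ℤ, (0:ℂ) := tsum_congr fun p => h p
      _ = 0 := tsum_zero
    obtain ⟨p, hp⟩ := hex
    have hle : p.1 ≤ m := by
      by_contra h; rw [if_neg h] at hp; exact hp rfl
    rw [if_pos hle] at hp
    have hA' : A p.1 p.2 ≠ 0 := left_ne_zero_of_mul hp
    have hB' : B (fun j => m j - p.1 j) (n - p.2) ≠ 0 := right_ne_zero_of_mul hp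
    have hmem : n = p.2 + (n - p.2) := by ring
    rw [hmem]
    exact Set.add_mem_add
      (Set.mem_biUnion (Set.mem_Icc.2 ⟨fun j => Nat.zero_le _, hle⟩) hA')
      (Set.mem_biUnion (Set.mem_Icc.2 ⟨fun j => Nat.zero_le _, fun j => Nat.sub_le _ _⟩) hB')
  · -- vanishing condition
    intro m n h
    have hz : ∀ p : (Fin s → ℕ) × ℤ,
        (if p.1 ≤ m then A p.1 p.2 * B (fun j => m j - p.1 j) (n - p.2) else 0) = 0 := by
      intro p
      by_cases hle : p.1 ≤ m
      · rw [if_pos hle]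
        by_contra hne
        have hA' := left_ne_zero_of_mul hne
        have hB' := right_ne_zero_of_mul hne
        have h1 : -(p.2:ℝ) ≤ nefPairing s r hrs ξ p.1 :=
          le_of_not_gt fun hc => hA' (hA1 _ _ hc)
        have h2 : -((n - p.2 : ℤ):ℝ) ≤ nefPairing s r hrs ξ (fun j => m j - p.1 j) :=
          le_of_not_gt fun hc => hB' (hB1 _ _ hc)
        have h3 := nefPairing_add (s := s) (r := r) (hrs := hrs) (ξ := ξ) hle
        push_cast at h2
        linarith
      · rw [if_neg hle]
    calc cauchyProdZ s A B m n
        = ∑' _p : (Fin s → ℕ) × ℤ, (0:ℂ) := tsum_congr hz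
    _ = 0 := tsum_zero
  · -- the growth bound
    intro m n
    set M : ℕ := ∑ j, m j with hM
    set N : ℕ := Kn * M with hN
    have hNb : ∀ m₁ : Fin s → ℕ, m₁ ≤ m → nefPairing s r hrs ξ m₁ ≤ (N:ℝ) := by
      intro m₁ h
      refine (nefPairing_mono hξ h).trans ((nefPairing_le hξ m).trans (le_of_eq ?_))
      rw [hN, hKn, hK, hM]
    set T : Finset ((Fin s → ℕ) × ℤ) :=
      (Finset.Icc 0 m) ×ˢ (Finset.Icc (-(N:ℤ)) (n + N)) with hT
    have hg0 : ∀ p : (Fin s → ℕ) × ℤ, p ∉ T →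
        (if p.1 ≤ m then A p.1 p.2 * B (fun j => m j - p.1 j) (n - p.2) else 0) = 0 := by
      intro p hp
      by_cases hle : p.1 ≤ m
      · rw [if_pos hle]
        have hp1 : p.1 ∈ Finset.Icc 0 m := Finset.mem_Icc.2 ⟨fun j => Nat.zero_le _, hle⟩
        have hp2 : p.2 ∉ Finset.Icc (-(N:ℤ)) (n + N) := by
          intro hc; exact hp (Finset.mem_product.2 ⟨hp1, hc⟩)
        rw [Finset.mem_Icc, not_and_or] at hp2
        rcases hp2 with h2 | h2 <;> push_neg at h2
        · have hz : A p.1 p.2 = 0 := by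
            refine hA1 _ _ (lt_of_le_of_lt (hNb p.1 hle) ?_)
            have : (N:ℤ) < -p.2 := by omega
            exact_mod_cast this
          rw [hz, zero_mul]
        · have hz : B (fun j => m j - p.1 j) (n - p.2) = 0 := by
            refine hB1 _ _ (lt_of_le_of_lt (hNb _ (fun j => Nat.sub_le _ _)) ?_)
            have : (N:ℤ) < -(n - p.2) := by omega
            exact_mod_cast this
          rw [hz, mul_zero]
      · rw [if_neg hle]
    have htsum : cauchyProdZ s A B m n = ∑ p ∈ T,
        (if p.1 ≤ m then A p.1 p.2 * B (fun j => m j - p.1 j) (n - p.2) else 0) :=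
      tsum_eq_sum hg0
    set U : ℝ := BA * BB * C ^ (M + 2 * n.natAbs + 2 * N) * 2 ^ (n.natAbs + N) * fW n with hU
    have hUnn : 0 ≤ U := by
      rw [hU]; exact mul_nonneg (by positivity) (fW_pos n).le
    have hUb : ∀ p ∈ T, ‖(if p.1 ≤ m then A p.1 p.2 * B (fun j => m j - p.1 j) (n - p.2) else 0)‖ ≤ U := by
      intro p hp
      obtain ⟨hp1, hp2⟩ := Finset.mem_product.1 hp
      rw [Finset.mem_Icc] at hp2
      by_cases hle : p.1 ≤ m
      swap
      · rw [if_neg hle]; simpa using hUnn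
      rw [if_pos hle, norm_mul]
      have hsum : (∑ j, p.1 j) + (∑ j, (m j - p.1 j)) = M := by
        rw [hM, ← Finset.sum_add_distrib]
        exact Finset.sum_congr rfl fun j _ => Nat.add_sub_cancel' (hle j)
      have hn1 : p.2.natAbs ≤ n.natAbs + N := by omega
      have hn2 : (n - p.2).natAbs ≤ n.natAbs + N := by omega
      calc ‖A p.1 p.2‖ * ‖B (fun j => m j - p.1 j) (n - p.2)‖
          ≤ (BA * C ^ ((∑ j, p.1 j) + p.2.natAbs) * fW p.2) *
            (BB * C ^ ((∑ j, (m j - p.1 j)) + (n - p.2).natAbs) * fW (n - p.2)) := by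
            refine mul_le_mul (hA2' _ _) (hB2' _ _) (norm_nonneg _) ?_
            exact mul_nonneg (by positivity) (fW_pos _).le
      _ = BA * BB * C ^ (((∑ j, p.1 j) + p.2.natAbs) +
            ((∑ j, (m j - p.1 j)) + (n - p.2).natAbs)) * (fW p.2 * fW (n - p.2)) := by
            rw [pow_add]; ring
      _ ≤ BA * BB * C ^ (M + 2 * n.natAbs + 2 * N) * (fW p.2 * fW (n - p.2)) := by
            refine mul_le_mul_of_nonneg_right ?_ (mul_nonneg (fW_pos _).le (fW_pos _).le)
            refine mul_le_mul_of_nonneg_left (pow_le_pow_right₀ hC1 ?_) (by positivity)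
            omega
      _ ≤ BA * BB * C ^ (M + 2 * n.natAbs + 2 * N) *
            (2 ^ (p.2 + (n - p.2)).natAbs * 2 ^ N * fW (p.2 + (n - p.2))) := by
            refine mul_le_mul_of_nonneg_left ?_ (by positivity)
            exact fW_mul_le _ _ N (by omega) (by omega)
      _ = U := by
            rw [show p.2 + (n - p.2) = n by ring, hU, pow_add]
            ring
    have hcard : (T.card : ℝ) ≤ 2 ^ M * ((n.natAbs + 2 * N + 1 : ℕ) : ℝ) := by
      have h1 : T.card = (Finset.Icc (0:Fin s → ℕ) m).card *
          (Finset.Icc (-(N:ℤ)) (n + N)).card := by rw [hT, Finset.card_product]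
      have h2 : (Finset.Icc (0:Fin s → ℕ) m).card ≤ 2 ^ M := by
        rw [Pi.card_Icc]
        calc ∏ j, (Finset.Icc (0:ℕ) (m j)).card = ∏ j, (m j + 1) := by
              refine Finset.prod_congr rfl fun j _ => ?_
              rw [Nat.card_Icc]
              omega
        _ ≤ ∏ j, 2 ^ (m j) := Finset.prod_le_prod' fun j _ => Nat.lt_two_pow_self (n := m j)
        _ = 2 ^ M := by rw [Finset.prod_pow_eq_pow_sum, hM]
      have h3 : (Finset.Icc (-(N:ℤ)) (n + N)).card ≤ n.natAbs + 2 * N + 1 := by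
        rw [Int.card_Icc]
        omega
      calc (T.card : ℝ) = ((Finset.Icc (0:Fin s → ℕ) m).card : ℝ) *
            ((Finset.Icc (-(N:ℤ)) (n + N)).card : ℝ) := by rw [h1]; push_cast; ring
      _ ≤ (2 ^ M : ℝ) * ((n.natAbs + 2 * N + 1 : ℕ) : ℝ) := by
          have h2' : ((Finset.Icc (0:Fin s → ℕ) m).card : ℝ) ≤ (2:ℝ) ^ M := by
            exact_mod_cast h2
          have h3' : ((Finset.Icc (-(N:ℤ)) (n + N)).card : ℝ) ≤
              ((n.natAbs + 2 * N + 1 : ℕ) : ℝ) := by exact_mod_cast h3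
          exact mul_le_mul h2' h3' (Nat.cast_nonneg _) (by positivity)
    have hcount : ((n.natAbs + 2 * N + 1 : ℕ) : ℝ) ≤ (2 * Kn + 1 : ℝ) ^ M * 2 ^ n.natAbs := by
      have h1 : ((n.natAbs : ℝ) + 1) ≤ 2 ^ n.natAbs := by
        exact_mod_cast Nat.lt_two_pow_self (n := n.natAbs)
      have h2 : (2 * (Kn:ℝ) * M + 1) ≤ (2 * Kn + 1) ^ M := by
        calc 2 * (Kn:ℝ) * M + 1 = 1 + M * (2 * Kn) := by ring
        _ ≤ (1 + 2 * Kn) ^ M := one_add_mul_le_pow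
            (by nlinarith [Nat.cast_nonneg (α := ℝ) Kn]) M
        _ = (2 * Kn + 1) ^ M := by ring_nf
      have hNcast : ((N:ℝ)) = (Kn:ℝ) * M := by rw [hN]; push_cast; ring
      push_cast
      rw [hNcast]
      nlinarith [Nat.cast_nonneg (α := ℝ) n.natAbs, Nat.cast_nonneg (α := ℝ) Kn,
        Nat.cast_nonneg (α := ℝ) M, h1, h2]
    have hslack : Am ^ M * An ^ n.natAbs ≤ (Am * An) ^ (M + n.natAbs) := by
      have h : (Am * An) ^ (M + n.natAbs) =
          (Am ^ M * An ^ n.natAbs) * (Am ^ n.natAbs * An ^ M) := by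
        rw [mul_pow, pow_add, pow_add]; ring
      rw [h]
      refine le_mul_of_one_le_right
        (mul_nonneg (pow_nonneg (zero_le_one.trans hAm1) _)
          (pow_nonneg (zero_le_one.trans hAn1) _)) ?_
      calc (1:ℝ) = 1 * 1 := (one_mul 1).symm
      _ ≤ Am ^ n.natAbs * An ^ M := mul_le_mul (one_le_pow_aux hAm1 _)
          (one_le_pow_aux hAn1 _) zero_le_one (pow_nonneg (zero_le_one.trans hAm1) _)
    show ‖cauchyProdZ s A B m n‖ ≤ BA * BB * (Am * An) ^ (M + n.natAbs) * fW n
    rw [htsum]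
    calc ‖∑ p ∈ T,
          (if p.1 ≤ m then A p.1 p.2 * B (fun j => m j - p.1 j) (n - p.2) else 0)‖
        ≤ ∑ p ∈ T, ‖(if p.1 ≤ m then A p.1 p.2 * B (fun j => m j - p.1 j) (n - p.2) else 0)‖ :=
        norm_sum_le _ _
    _ ≤ T.card • U := Finset.sum_le_card_nsmul _ _ _ hUb
    _ = (T.card : ℝ) * U := nsmul_eq_mul _ _
    _ ≤ (2 ^ M * ((n.natAbs + 2 * N + 1 : ℕ) : ℝ)) * U :=
        mul_le_mul_of_nonneg_right hcard hUnn
    _ ≤ (2 ^ M * ((2 * Kn + 1 : ℝ) ^ M * 2 ^ n.natAbs)) * U := by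
        refine mul_le_mul_of_nonneg_right ?_ hUnn
        exact mul_le_mul_of_nonneg_left hcount (by positivity)
    _ = BA * BB * (Am ^ M * An ^ n.natAbs) * fW n := by
        rw [hU, hAm, hAn, hN,
            mul_pow (2 * (2 * (Kn:ℝ) + 1) * C ^ (2 * Kn + 1)) (2 ^ Kn) M,
            mul_pow (2 * (2 * (Kn:ℝ) + 1)) (C ^ (2 * Kn + 1)) M,
            mul_pow 2 (2 * (Kn:ℝ) + 1) M,
            mul_pow ((2:ℝ) ^ 2) (C ^ 2) n.natAbs,
            ← pow_mul C (2 * Kn + 1) M, ← pow_mul (2:ℝ) Kn M, ← pow_mul C 2 n.natAbs,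
            ← pow_mul (2:ℝ) 2 n.natAbs]
        ring
    _ ≤ BA * BB * ((Am * An) ^ (M + n.natAbs)) * fW n := by
        refine mul_le_mul_of_nonneg_right ?_ (fW_pos n).le
        exact mul_le_mul_of_nonneg_left hslack (by positivity)

lemma memOhh_add (s r : ℕ) (hrs : r ≤ s) (ξ : Fin r → ℝ)
    (A B : (Fin s → ℕ) → ℤ → ℂ)
    (hA : MemOhh s r hrs ξ A) (hB : MemOhh s r hrs ξ B) :
    MemOhh s r hrs ξ (fun m n => A m n + B m n) := by
  obtain ⟨hA0, hA1, BA, CA, hBA, hCA, hA2⟩ := hA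
  obtain ⟨hB0, hB1, BB, CB, hBB, hCB, hB2⟩ := hB
  refine ⟨?_, ?_, BA + BB, max CA CB, by positivity, lt_of_lt_of_le hCA (le_max_left _ _), ?_⟩
  · intro m
    refine Set.Finite.subset ((hA0 m).union (hB0 m)) ?_
    intro n hn
    by_contra h
    simp only [Set.mem_union, Set.mem_setOf_eq, not_or, not_not] at h
    exact hn (by simp [h.1, h.2])
  · intro m n h
    simp [hA1 m n h, hB1 m n h]
  · intro m n
    have hf : (0:ℝ) ≤ (if 0 ≤ n then 1 / (Nat.factorial n.toNat : ℝ)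
        else (Nat.factorial n.natAbs : ℝ)) := by split <;> positivity
    calc ‖A m n + B m n‖ ≤ ‖A m n‖ + ‖B m n‖ :=
        norm_add_le _ _
    _ ≤ BA * CA ^ ((∑ j, m j) + n.natAbs) * _ + BB * CB ^ ((∑ j, m j) + n.natAbs) * _ :=
        add_le_add (hA2 m n) (hB2 m n)
    _ ≤ BA * (max CA CB) ^ ((∑ j, m j) + n.natAbs) * _
          + BB * (max CA CB) ^ ((∑ j, m j) + n.natAbs) * _ := by
        gcongr <;> [exact le_max_left _ _; exact le_max_right _ _]
    _ = (BA + BB) * (max CA CB) ^ ((∑ j, m j) + n.natAbs) * _ := by ring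

end Helpers

/-- If `A` and `B` both belong to `𝒪^{ℏ,ℏ⁻¹}(ρ)` then so do `A + B` and their
Cauchy product; hence `𝒪^{ℏ,ℏ⁻¹}(ρ)` is a subring of the ring of formal series
`∑ A(m,n) x^m ℏ^{-n}`. -/
theorem memOhh_add_and_mul (s r : ℕ) (hr : 1 ≤ r) (hrs : r ≤ s)
    (ξ : Fin r → ℝ) (hξ : ∀ a, 0 ≤ ξ a)
    (A B : (Fin s → ℕ) → ℤ → ℂ)
    (hA : MemOhh s r hrs ξ A) (hB : MemOhh s r hrs ξ B) :
    MemOhh s r hrs ξ (fun m n => A m n + B m n) ∧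
    MemOhh s r hrs ξ (cauchyProdZ s A B) := by
  exact ⟨memOhh_add s r hrs ξ A B hA hB, memOhh_mul s r hrs ξ hξ A B hA hB⟩
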